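/- arXiv:1509.01667 — 5 statements merged into one kernel-verified Lean document; each statement's English description precedes it below -/
import Mathlib

section
/- For distinct real numbers Z_1, ..., Z_N, define U_μ = ∏_{ν≠μ} (Z_ν − Z_μ) and A_μ^{(i)} = Σ_{ν_1<...<ν_i, ν_k≠μ} Z_{ν_1}···Z_{ν_i} (with A_μ^{(0)} = 1). Then for all i, j ∈ {0, ..., N−1}: Σ_μ (A_μ^{(i)} / U_μ) · (−Z_μ)^{N−1−j} = δ_{ij}. -/
open Finset Polynomial

theorem stmt_0 (N : ℕ) (hN : 0 < N) (Z : Fin N → ℝ)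
    (hZ : Function.Injective Z)
    (U : Fin N → ℝ) (hU : ∀ μ, U μ = ∏ ν ∈ univ.erase μ, (Z ν - Z μ))
    (A : Fin N → ℕ → ℝ)
    (hA : ∀ μ i, A μ i = ∑ t ∈ (univ.erase μ).powersetCard i, ∏ ν ∈ t, Z ν) :
    ∀ i j : ℕ, i < N → j < N →
      ∑ μ, A μ i / U μ * (-Z μ) ^ (N - 1 - j) = if i = j then 1 else 0 := by
  intro i j hi hj
  set W : Fin N → ℝ := fun μ => -Z μ with hWdef
  have hWinj : Function.Injective W := fun a b h => hZ (neg_injective h)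
  have hInj : Set.InjOn W (univ : Finset (Fin N)) := fun a _ b _ h => hWinj h
  have hi' : i ≤ N - 1 := Nat.le_sub_one_of_lt hi
  have hj' : j ≤ N - 1 := Nat.le_sub_one_of_lt hj
  have hdeg : (X ^ (N - 1 - j) : ℝ[X]).degree < ((univ : Finset (Fin N)).card : ℕ) := by
    rw [Polynomial.degree_X_pow, card_univ, Fintype.card_fin]
    exact_mod_cast Nat.lt_of_le_of_lt (Nat.sub_le _ _) (Nat.sub_lt hN one_pos)
  have key := Lagrange.eq_interpolate (f := (X : ℝ[X]) ^ (N - 1 - j)) hInj hdeg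
  have hco := congrArg (fun p => Polynomial.coeff p (N - 1 - i)) key
  simp only [Lagrange.interpolate_apply, Polynomial.finset_sum_coeff,
    Polynomial.coeff_C_mul, Polynomial.eval_pow, Polynomial.eval_X] at hco
  -- compute the coefficient of each basis polynomial
  have hbasis : ∀ μ : Fin N, (Lagrange.basis univ W μ).coeff (N - 1 - i) = A μ i / U μ := by
    intro μ
    have hcard : (univ.erase μ).card = N - 1 := by
      rw [card_erase_of_mem (mem_univ μ), card_univ, Fintype.card_fin]
    have hsplit : Lagrange.basis univ W μ =
        Polynomial.C (∏ ν ∈ univ.erase μ, (W μ - W ν)⁻¹) *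
          ∏ ν ∈ univ.erase μ, (X - Polynomial.C (W ν)) := by
      rw [Lagrange.basis]
      simp only [Lagrange.basisDivisor]
      rw [prod_mul_distrib, map_prod]
    have hmk : ((univ.erase μ).val.map W).card = N - 1 := by
      rw [Multiset.card_map, ← hcard]; rfl
    have hkle : N - 1 - i ≤ Multiset.card ((univ.erase μ).val.map W) := by
      rw [hmk]; exact Nat.sub_le _ _
    have hprodeq : (∏ ν ∈ univ.erase μ, (X - Polynomial.C (W ν))) =
        (((univ.erase μ).val.map W).map fun t => X - Polynomial.C t).prod := by
      rw [Multiset.map_map]; rfl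
    have hcoeff := Multiset.prod_X_sub_C_coeff ((univ.erase μ).val.map W) hkle
    rw [hmk] at hcoeff
    have hii : N - 1 - (N - 1 - i) = i := Nat.sub_sub_self hi'
    rw [hii] at hcoeff
    have hesymm : ((univ.erase μ).val.map W).esymm i =
        ∑ t ∈ (univ.erase μ).powersetCard i, ∏ ν ∈ t, W ν :=
      Finset.esymm_map_val W _ i
    have hAW : ∑ t ∈ (univ.erase μ).powersetCard i, ∏ ν ∈ t, W ν = (-1 : ℝ) ^ i * A μ i := by
      rw [hA, mul_sum]
      refine Finset.sum_congr rfl fun t ht => ?_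
      have htc : t.card = i := (Finset.mem_powersetCard.mp ht).2
      simp only [hWdef]
      rw [← htc, ← Finset.prod_const, ← Finset.prod_mul_distrib]
      exact Finset.prod_congr rfl fun ν _ => by ring
    have hUeq : (∏ ν ∈ univ.erase μ, (W μ - W ν)) = U μ := by
      rw [hU]
      refine Finset.prod_congr rfl fun ν _ => ?_
      simp [hWdef]; ring
    rw [hsplit, Polynomial.coeff_C_mul, hprodeq, hcoeff, hesymm, hAW,
      Finset.prod_inv_distrib, hUeq]
    have h1 : ((-1 : ℝ)) ^ i * ((-1 : ℝ) ^ i * A μ i) = A μ i := by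
      rw [← mul_assoc, ← mul_pow]; norm_num
    rw [h1, div_eq_mul_inv, mul_comm]
  simp only [hbasis] at hco
  have hlhs : ((X : ℝ[X]) ^ (N - 1 - j)).coeff (N - 1 - i) = if i = j then 1 else 0 := by
    rw [Polynomial.coeff_X_pow]
    congr 1
    simp only [eq_iff_iff]
    constructor
    · intro h; omega
    · intro h; rw [h]
  rw [← hlhs, hco]
  refine Finset.sum_congr rfl fun μ _ => ?_
  simp only [hWdef]
  ring
end

section
/- For distinct real numbers Z_1, ..., Z_N and U_μ = ∏_{α≠μ}(Z_α − Z_μ), for every fixed ν: (1/U_ν) · Σ_{μ≠ν} 1/(Z_μ − Z_ν) = Σ_{μ≠ν} (1/U_μ) · 1/(Z_ν − Z_μ). -/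
open Finset Polynomial

lemma deriv_fin_prod {ι : Type*} [DecidableEq ι] (s : Finset ι) (f : ι → ℝ[X]) :
    derivative (∏ i ∈ s, f i) = ∑ i ∈ s, (∏ j ∈ s.erase i, f j) * derivative (f i) := by
  classical
  induction s using Finset.induction_on with
  | empty => simp
  | insert a s hx ih =>
    rw [Finset.prod_insert hx, derivative_mul, ih, Finset.sum_insert hx,
      Finset.erase_insert hx, Finset.mul_sum]
    have h2 : ∀ j ∈ s, (∏ k ∈ (insert a s).erase j, f k) * derivative (f j)
        = f a * ((∏ k ∈ s.erase j, f k) * derivative (f j)) := by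
      intro j hj
      rw [Finset.erase_insert_of_ne (by rintro rfl; exact hx hj),
        Finset.prod_insert (by simp [hx]), mul_assoc]
    rw [Finset.sum_congr rfl h2]
    ring

theorem stmt_2 (N : ℕ) (hN : 2 ≤ N) (Z : Fin N → ℝ)
    (hZ : Function.Injective Z)
    (U : Fin N → ℝ) (hU : ∀ μ, U μ = ∏ α ∈ univ.erase μ, (Z α - Z μ)) :
    ∀ ν : Fin N,
      (1 / U ν) * ∑ μ ∈ univ.erase ν, 1 / (Z μ - Z ν)
        = ∑ μ ∈ univ.erase ν, (1 / U μ) * (1 / (Z ν - Z μ)) := by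
  intro ν
  classical
  set W : Fin N → ℝ := fun μ => ∏ j ∈ univ.erase μ, (Z μ - Z j) with hWdef
  have hsub : ∀ {a b : Fin N}, a ≠ b → Z a - Z b ≠ 0 := fun h =>
    sub_ne_zero.mpr (fun hc => h (hZ hc))
  have hWne : ∀ μ, W μ ≠ 0 := by
    intro μ
    refine Finset.prod_ne_zero_iff.mpr ?_
    intro j hj
    exact hsub (fun h => (mem_erase.mp hj).1 h.symm)
  -- the derivative of the sum of Lagrange basis polynomials vanishes
  have hinj : Set.InjOn Z (univ : Finset (Fin N)) := fun a _ b _ h => hZ h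
  have hsum := Lagrange.sum_basis hinj ⟨ν, mem_univ ν⟩
  have hder : ∑ μ : Fin N, eval (Z ν) (derivative (Lagrange.basis univ Z μ)) = 0 := by
    have h1 : derivative (∑ μ : Fin N, Lagrange.basis univ Z μ) = 0 := by
      rw [hsum]; simp
    rw [map_sum] at h1
    have h2 := congrArg (eval (Z ν)) h1
    rwa [eval_finset_sum, eval_zero] at h2
  have hbd : ∀ x y : ℝ, derivative (Lagrange.basisDivisor x y) = C (x - y)⁻¹ := by
    intro x y; simp [Lagrange.basisDivisor]
  -- evaluation of derivative of basis μ at Z ν, for μ ≠ ν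
  have hA : ∀ μ ∈ univ.erase ν, eval (Z ν) (derivative (Lagrange.basis univ Z μ))
      = W ν * (W μ)⁻¹ * (Z ν - Z μ)⁻¹ := by
    intro μ hμ
    have hμν : μ ≠ ν := (mem_erase.mp hμ).1
    have hνmem : ν ∈ univ.erase μ := mem_erase.mpr ⟨hμν.symm, mem_univ ν⟩
    rw [Lagrange.basis, deriv_fin_prod, eval_finset_sum]
    rw [Finset.sum_eq_single_of_mem ν hνmem ?_]
    · rw [eval_mul, hbd, eval_C, eval_prod]
      have h3 : ∀ k ∈ (univ.erase μ).erase ν,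
          eval (Z ν) (Lagrange.basisDivisor (Z μ) (Z k)) = (Z μ - Z k)⁻¹ * (Z ν - Z k) := by
        intro k hk; simp [Lagrange.basisDivisor]
      rw [Finset.prod_congr rfl h3, Finset.prod_mul_distrib]
      have e1 : W μ = (Z μ - Z ν) * ∏ k ∈ (univ.erase μ).erase ν, (Z μ - Z k) :=
        (Finset.mul_prod_erase _ _ hνmem).symm
      have e2 : W ν = (Z ν - Z μ) * ∏ k ∈ (univ.erase ν).erase μ, (Z ν - Z k) :=
        (Finset.mul_prod_erase _ _ (mem_erase.mpr ⟨hμν, mem_univ μ⟩)).symm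
      have e3 : (univ.erase μ).erase ν = (univ.erase ν).erase μ := Finset.erase_right_comm
      have hpne : (∏ k ∈ (univ.erase μ).erase ν, (Z μ - Z k)) ≠ 0 := by
        refine Finset.prod_ne_zero_iff.mpr ?_
        intro k hk
        exact hsub (fun h => (mem_erase.mp (mem_erase.mp hk).2).1 h.symm)
      rw [e1, e2, e3]
      rw [e3] at hpne
      rw [Finset.prod_inv_distrib]
      field_simp [hsub hμν, hsub hμν.symm]
    · intro j hj hjν
      rw [eval_mul]
      have h0 : eval (Z ν) (∏ k ∈ (univ.erase μ).erase j,
          Lagrange.basisDivisor (Z μ) (Z k)) = 0 := by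
        rw [eval_prod]
        refine Finset.prod_eq_zero (i := ν) (mem_erase.mpr ⟨Ne.symm hjν, hνmem⟩) ?_
        exact Lagrange.eval_basisDivisor_right
      rw [h0, zero_mul]
  -- evaluation of derivative of basis ν at Z ν
  have hB : eval (Z ν) (derivative (Lagrange.basis univ Z ν))
      = ∑ j ∈ univ.erase ν, (Z ν - Z j)⁻¹ := by
    rw [Lagrange.basis, deriv_fin_prod, eval_finset_sum]
    refine Finset.sum_congr rfl fun j hj => ?_
    rw [eval_mul, hbd, eval_C, eval_prod]
    have h1 : ∀ k ∈ (univ.erase ν).erase j,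
        eval (Z ν) (Lagrange.basisDivisor (Z ν) (Z k)) = 1 := by
      intro k hk
      exact Lagrange.eval_basisDivisor_left_of_ne
        (fun h => (mem_erase.mp (mem_erase.mp hk).2).1 (hZ h.symm))
    rw [Finset.prod_congr rfl h1, Finset.prod_const_one, one_mul]
  -- key identity
  have key : W ν * ∑ μ ∈ univ.erase ν, (W μ)⁻¹ * (Z ν - Z μ)⁻¹
      + ∑ j ∈ univ.erase ν, (Z ν - Z j)⁻¹ = 0 := by
    rw [← Finset.add_sum_erase _ _ (mem_univ ν)] at hder
    rw [hB, Finset.sum_congr rfl hA] at hder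
    have hms : W ν * ∑ μ ∈ univ.erase ν, (W μ)⁻¹ * (Z ν - Z μ)⁻¹
        = ∑ μ ∈ univ.erase ν, W ν * (W μ)⁻¹ * (Z ν - Z μ)⁻¹ := by
      rw [Finset.mul_sum]
      exact Finset.sum_congr rfl fun _ _ => (mul_assoc _ _ _).symm
    rw [hms]
    linarith [hder]
  -- relation between U and W
  have hUW : ∀ μ, U μ = (-1 : ℝ) ^ (N - 1) * W μ := by
    intro μ
    rw [hU μ]
    have h1 : ∀ α ∈ univ.erase μ, Z α - Z μ = (-1) * (Z μ - Z α) := by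
      intro α _; ring
    rw [Finset.prod_congr rfl h1, Finset.prod_mul_distrib, Finset.prod_const,
      Finset.card_erase_of_mem (mem_univ μ), Finset.card_univ, Fintype.card_fin]
  set c : ℝ := (-1 : ℝ) ^ (N - 1) with hcdef
  have hc : c ≠ 0 := pow_ne_zero _ (by norm_num)
  -- reduce the goal
  have hT : ∑ μ ∈ univ.erase ν, (Z μ - Z ν)⁻¹
      = - ∑ μ ∈ univ.erase ν, (Z ν - Z μ)⁻¹ := by
    rw [← Finset.sum_neg_distrib]
    exact Finset.sum_congr rfl fun μ _ => by rw [← inv_neg, neg_sub]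
  have hgoal2 : (W ν)⁻¹ * ∑ μ ∈ univ.erase ν, (Z μ - Z ν)⁻¹
      = ∑ μ ∈ univ.erase ν, (W μ)⁻¹ * (Z ν - Z μ)⁻¹ := by
    rw [hT]
    have h5 : - ∑ j ∈ univ.erase ν, (Z ν - Z j)⁻¹
        = W ν * ∑ μ ∈ univ.erase ν, (W μ)⁻¹ * (Z ν - Z μ)⁻¹ := by linarith [key]
    rw [h5, ← mul_assoc, inv_mul_cancel₀ (hWne ν), one_mul]
  simp only [hUW, one_div, mul_inv]
  rw [mul_assoc, hgoal2, Finset.mul_sum]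
  exact Finset.sum_congr rfl fun μ _ => by ring
end

section
/- For distinct nonzero real numbers Z_1, ..., Z_N, with U_μ = ∏_{ν≠μ}(Z_ν − Z_μ), A_μ^{(j)} the j-th elementary symmetric polynomial of {Z_ν : ν≠μ}, A^{(j)} the j-th elementary symmetric polynomial of all Z_μ, and A^{(N)} = Z_1···Z_N: Σ_μ A_μ^{(j)} / (Z_μ · U_μ) = A^{(j)} / A^{(N)} for all j ∈ {0, ..., N−1}. -/
open Finset Polynomial

lemma key_coeff {N : ℕ} (Z : Fin N → ℝ) (hZ : Function.Injective Z)
    (f : ℝ[X]) (hf : f.degree < (N : WithBot ℕ)) :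
    f.coeff (N - 1) = ∑ μ, f.eval (Z μ) * ∏ ν ∈ univ.erase μ, (Z μ - Z ν)⁻¹ := by
  have hvs : Set.InjOn Z (univ : Finset (Fin N)) := Function.Injective.injOn hZ
  have hcard : #(univ : Finset (Fin N)) = N := by simp
  have hfe : f = Lagrange.interpolate univ Z fun i => f.eval (Z i) :=
    Lagrange.eq_interpolate hvs (by rwa [hcard])
  conv_lhs => rw [hfe]
  rw [Lagrange.interpolate_apply, finset_sum_coeff]
  refine Finset.sum_congr rfl fun μ _ => ?_
  rw [coeff_C_mul]
  congr 1
  have hb : (Lagrange.basis univ Z μ).natDegree = N - 1 := by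
    rw [Lagrange.natDegree_basis hvs (mem_univ μ), hcard]
  have hlc : (Lagrange.basis univ Z μ).coeff (N - 1) = (Lagrange.basis univ Z μ).leadingCoeff := by
    rw [leadingCoeff, hb]
  rw [hlc, Lagrange.basis, leadingCoeff_prod]
  refine Finset.prod_congr rfl fun ν hν => ?_
  rw [Lagrange.basisDivisor, leadingCoeff_mul, leadingCoeff_C, (monic_X_sub_C (Z ν)).leadingCoeff,
    mul_one]

lemma esymm_rec {N : ℕ} (Z : Fin N → ℝ) (μ : Fin N) (i : ℕ) :
    ∑ t ∈ (univ : Finset (Fin N)).powersetCard (i+1), ∏ ν ∈ t, Z ν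
      = (∑ t ∈ (univ.erase μ).powersetCard (i+1), ∏ ν ∈ t, Z ν)
        + Z μ * ∑ t ∈ (univ.erase μ).powersetCard i, ∏ ν ∈ t, Z ν := by
  have huniv : (univ : Finset (Fin N)) = insert μ (univ.erase μ) :=
    (insert_erase (mem_univ μ)).symm
  conv_lhs => rw [huniv]
  rw [powersetCard_succ_insert (notMem_erase μ univ)]
  rw [sum_union]
  · congr 1
    rw [sum_image]
    · rw [Finset.mul_sum]
      refine Finset.sum_congr rfl fun t ht => ?_
      have hμt : μ ∉ t := fun h => (notMem_erase μ univ) ((mem_powersetCard.mp ht).1 h)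
      rw [prod_insert hμt]
    · intro t₁ h₁ t₂ h₂ h
      have hμ₁ : μ ∉ t₁ := fun h' => (notMem_erase μ univ) ((mem_powersetCard.mp h₁).1 h')
      have hμ₂ : μ ∉ t₂ := fun h' => (notMem_erase μ univ) ((mem_powersetCard.mp h₂).1 h')
      rw [← erase_insert hμ₁, ← erase_insert hμ₂, h]
  · rw [disjoint_left]
    intro t ht ht'
    obtain ⟨s, hs, rfl⟩ := mem_image.mp ht'
    have : μ ∉ insert μ s := fun h => (notMem_erase μ univ) ((mem_powersetCard.mp ht).1 h)
    exact this (mem_insert_self μ s)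

noncomputable def Ppoly (A : ℕ → ℝ) (i : ℕ) : ℝ[X] :=
  ∑ k ∈ Finset.range (i+1), C ((-1)^k * A (i-k)) * X^k

lemma Ppoly_succ (A : ℕ → ℝ) (i : ℕ) :
    Ppoly A (i+1) + X * Ppoly A i = C (A (i+1)) := by
  unfold Ppoly
  rw [Finset.sum_range_succ' (fun k => C ((-1)^k * A (i+1-k)) * X^k) (i+1), Finset.mul_sum]
  have h0 : C ((-1:ℝ)^0 * A (i+1-0)) * X^0 = C (A (i+1)) := by simp
  rw [h0, add_comm (∑ k ∈ Finset.range (i+1), C ((-1:ℝ)^(k+1) * A (i+1-(k+1))) * X^(k+1)) _,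
    add_assoc, add_eq_left, ← Finset.sum_add_distrib]
  refine Finset.sum_eq_zero fun k _ => ?_
  have hik : i + 1 - (k+1) = i - k := by omega
  rw [hik]
  simp only [map_mul, map_pow, map_neg, map_one]
  ring

lemma Ppoly_natDegree_le (A : ℕ → ℝ) (i : ℕ) : (Ppoly A i).natDegree ≤ i := by
  refine Polynomial.natDegree_sum_le_of_forall_le _ _ fun k hk => ?_
  refine le_trans (natDegree_mul_le) ?_
  simp only [natDegree_C, natDegree_X_pow, zero_add]
  exact Nat.lt_succ_iff.mp (Finset.mem_range.mp hk)

lemma Ppoly_coeff_self (A : ℕ → ℝ) (i : ℕ) : (Ppoly A i).coeff i = (-1)^i * A 0 := by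
  unfold Ppoly
  rw [finset_sum_coeff]
  simp only [coeff_C_mul, coeff_X_pow, mul_ite, mul_one, mul_zero]
  rw [Finset.sum_ite_eq (Finset.range (i+1)) i (fun k => (-1:ℝ)^k * A (i-k))]
  simp

theorem stmt_4 (N : ℕ) (hN : 0 < N) (Z : Fin N → ℝ)
    (hZ : Function.Injective Z) (hZ0 : ∀ μ, Z μ ≠ 0)
    (U : Fin N → ℝ) (hU : ∀ μ, U μ = ∏ ν ∈ univ.erase μ, (Z ν - Z μ))
    (A : ℕ → ℝ) (hAfull : ∀ i, A i = ∑ t ∈ (univ : Finset (Fin N)).powersetCard i, ∏ ν ∈ t, Z ν)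
    (Amu : Fin N → ℕ → ℝ)
    (hAmu : ∀ μ i, Amu μ i = ∑ t ∈ (univ.erase μ).powersetCard i, ∏ ν ∈ t, Z ν) :
    ∀ j : ℕ, j < N →
      ∑ μ, Amu μ j / (Z μ * U μ) = A j / ∏ μ, Z μ := by
  have hcardE : ∀ μ : Fin N, #(univ.erase μ) = N - 1 := fun μ => by
    rw [card_erase_of_mem (mem_univ μ), card_univ, Fintype.card_fin]
  have hA0 : A 0 = 1 := by rw [hAfull]; simp
  have hAmu0 : ∀ μ, Amu μ 0 = 1 := fun μ => by rw [hAmu]; simp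
  have hrec : ∀ (μ : Fin N) (i : ℕ), A (i+1) = Amu μ (i+1) + Z μ * Amu μ i := by
    intro μ i
    rw [hAfull, hAmu, hAmu]
    exact esymm_rec Z μ i
  have heval : ∀ (μ : Fin N) (i : ℕ), (Ppoly A i).eval (Z μ) = Amu μ i := by
    intro μ i
    induction i with
    | zero => simp [Ppoly, hA0, hAmu0 μ]
    | succ i ih =>
      have h := congrArg (eval (Z μ)) (Ppoly_succ A i)
      simp only [eval_add, eval_mul, eval_X, eval_C] at h
      rw [ih] at h
      have h2 := hrec μ i
      linarith
  set W : Fin N → ℝ := fun μ => ∏ ν ∈ univ.erase μ, (Z μ - Z ν)⁻¹ with hW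
  have hsum : ∀ i : ℕ, i < N → ∑ μ, Amu μ i * W μ = (Ppoly A i).coeff (N-1) := by
    intro i hi
    rw [key_coeff Z hZ (Ppoly A i)
      (lt_of_le_of_lt degree_le_natDegree
        (by exact_mod_cast lt_of_le_of_lt (Ppoly_natDegree_le A i) hi))]
    exact Finset.sum_congr rfl fun μ _ => by rw [heval]
  have hUne : ∀ μ, U μ ≠ 0 := by
    intro μ
    rw [hU]
    refine Finset.prod_ne_zero_iff.mpr fun ν hν => sub_ne_zero.mpr ?_
    exact fun h => (mem_erase.mp hν).1 (hZ h)
  have hUinv : ∀ μ, (U μ)⁻¹ = (-1:ℝ)^(N-1) * W μ := by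
    intro μ
    rw [hU]
    have h1 : ∏ ν ∈ univ.erase μ, (Z ν - Z μ)
        = (-1:ℝ)^(N-1) * ∏ ν ∈ univ.erase μ, (Z μ - Z ν) := by
      rw [← hcardE μ, ← Finset.prod_const (-1:ℝ), ← Finset.prod_mul_distrib]
      exact Finset.prod_congr rfl fun ν _ => by ring
    rw [h1, mul_inv, hW]
    rw [← Finset.prod_inv_distrib]
    congr 1
    rw [← inv_pow, inv_neg, inv_one]
  have hM1 : ∀ μ, Z μ * Amu μ (N-1) = ∏ ν, Z ν := by
    intro μ
    rw [hAmu, ← hcardE μ, powersetCard_self, sum_singleton]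
    exact mul_prod_erase univ Z (mem_univ μ)
  have hprodne : (∏ ν, Z ν) ≠ 0 := Finset.prod_ne_zero_iff.mpr fun ν _ => hZ0 ν
  have hsq : (-1:ℝ)^(N-1) * (-1:ℝ)^(N-1) = 1 := by
    rw [← pow_add, ← two_mul, pow_mul]
    norm_num
  have L : ∑ μ, (Z μ * U μ)⁻¹ = (∏ ν, Z ν)⁻¹ := by
    have hterm : ∀ μ : Fin N,
        (Z μ * U μ)⁻¹ = ((-1:ℝ)^(N-1) * (∏ ν, Z ν)⁻¹) * (Amu μ (N-1) * W μ) := by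
      intro μ
      rw [mul_inv, hUinv μ]
      have hAne : Amu μ (N-1) ≠ 0 := by
        intro h0
        exact hprodne (by rw [← hM1 μ, h0, mul_zero])
      have hz : (Z μ)⁻¹ = Amu μ (N-1) * (∏ ν, Z ν)⁻¹ := by
        rw [← hM1 μ, mul_inv_rev, ← mul_assoc, mul_inv_cancel₀ hAne, one_mul]
      rw [hz]; ring
    rw [Finset.sum_congr rfl fun μ _ => hterm μ, ← Finset.mul_sum, hsum (N-1) (by omega),
      Ppoly_coeff_self, hA0, mul_one]
    calc (-1:ℝ)^(N-1) * (∏ ν, Z ν)⁻¹ * (-1:ℝ)^(N-1)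
        = ((-1:ℝ)^(N-1) * (-1:ℝ)^(N-1)) * (∏ ν, Z ν)⁻¹ := by ring
      _ = (∏ ν, Z ν)⁻¹ := by rw [hsq, one_mul]
  intro j hj
  cases j with
  | zero =>
    rw [hA0, one_div, ← L]
    exact Finset.sum_congr rfl fun μ _ => by rw [hAmu0, one_div]
  | succ i =>
    have hi : i < N - 1 := by omega
    have hterm : ∀ μ : Fin N,
        Amu μ (i+1) / (Z μ * U μ) = A (i+1) * (Z μ * U μ)⁻¹ - Amu μ i * (U μ)⁻¹ := by
      intro μ
      rw [show Amu μ (i+1) = A (i+1) - Z μ * Amu μ i from by linarith [hrec μ i], sub_div,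
        mul_div_mul_left (Amu μ i) (U μ) (hZ0 μ), div_eq_mul_inv, div_eq_mul_inv]
    rw [Finset.sum_congr rfl fun μ _ => hterm μ, Finset.sum_sub_distrib, ← Finset.mul_sum, L]
    have h2 : ∑ μ, Amu μ i * (U μ)⁻¹ = 0 := by
      have h3 : ∀ μ : Fin N, Amu μ i * (U μ)⁻¹ = (-1:ℝ)^(N-1) * (Amu μ i * W μ) := fun μ => by
        rw [hUinv]; ring
      rw [Finset.sum_congr rfl fun μ _ => h3 μ, ← Finset.mul_sum, hsum i (by omega),
        coeff_eq_zero_of_natDegree_lt (lt_of_le_of_lt (Ppoly_natDegree_le A i) hi), mul_zero]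
    rw [h2, sub_zero, div_eq_mul_inv]
end

section
/- Let Z_1(x_1), ..., Z_N(x_N) be differentiable single-variable functions with pairwise distinct values, and A_μ^{(i)} the i-th elementary symmetric polynomial of {Z_ν(x_ν) : ν ≠ μ}. Then for μ ≠ ν, ∂A_μ^{(i)}/∂x_ν = (Z'_ν/(Z_ν − Z_μ)) · (A_μ^{(i)} − A_ν^{(i)}). -/
open Finset

lemma sum_powersetCard_insert_aux {α : Type*} [DecidableEq α] (w : Finset α) (a : α)
    (ha : a ∉ w) (j : ℕ) (f : α → ℝ) :
    ∑ u ∈ (insert a w).powersetCard (j+1), ∏ ρ ∈ u, f ρ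
      = (∑ u ∈ w.powersetCard (j+1), ∏ ρ ∈ u, f ρ)
        + f a * ∑ u ∈ w.powersetCard j, ∏ ρ ∈ u, f ρ := by
  rw [Finset.powersetCard_succ_insert ha, Finset.sum_union, Finset.sum_image, Finset.mul_sum]
  · congr 1
    refine Finset.sum_congr rfl fun u hu => ?_
    have hau : a ∉ u := fun h => ha ((Finset.mem_powersetCard.1 hu).1 h)
    rw [Finset.prod_insert hau]
  · intro u hu v hv huv
    have hau : a ∉ u := fun h => ha ((Finset.mem_powersetCard.1 hu).1 h)
    have hav : a ∉ v := fun h => ha ((Finset.mem_powersetCard.1 hv).1 h)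
    rw [← Finset.erase_insert hau, ← Finset.erase_insert hav, huv]
  · rw [Finset.disjoint_right]
    intro u hu hu'
    obtain ⟨v, hv, rfl⟩ := Finset.mem_image.1 hu
    have : a ∉ insert a v → False := fun h => h (Finset.mem_insert_self a v)
    exact this fun h => ha ((Finset.mem_powersetCard.1 hu').1 (Finset.mem_insert_self a v)) |>.elim

theorem stmt_8 (N : ℕ) (Z : Fin N → ℝ → ℝ)
    (hdiff : ∀ μ, Differentiable ℝ (Z μ))
    (A : Fin N → ℕ → (Fin N → ℝ) → ℝ)
    (hA : ∀ μ i y, A μ i y = ∑ t ∈ (univ.erase μ).powersetCard i, ∏ ν ∈ t, Z ν (y ν))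
    (x : Fin N → ℝ)
    (hne : ∀ μ ν, μ ≠ ν → Z μ (x μ) ≠ Z ν (x ν)) :
    ∀ μ ν : Fin N, μ ≠ ν → ∀ i : ℕ,
      deriv (fun t => A μ i (Function.update x ν t)) (x ν)
        = deriv (Z ν) (x ν) / (Z ν (x ν) - Z μ (x μ)) * (A μ i x - A ν i x) := by
  intro μ ν hμν i
  set s : Finset (Fin N) := (univ.erase μ).erase ν with hs
  have hνs : ν ∉ s := notMem_erase _ _
  have hμs : μ ∉ s := fun h => (notMem_erase μ univ) (mem_of_mem_erase h)
  have h1 : univ.erase μ = insert ν s :=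
    (insert_erase (mem_erase.2 ⟨Ne.symm hμν, mem_univ ν⟩)).symm
  have h2 : univ.erase ν = insert μ s := by
    have hcomm : s = (univ.erase ν).erase μ := by
      ext a; simp [hs, and_comm]
    rw [hcomm]
    exact (insert_erase (mem_erase.2 ⟨hμν, mem_univ μ⟩)).symm
  cases i with
  | zero =>
    simp [hA, Finset.powersetCard_zero]
  | succ j =>
    set C0 : ℝ := ∑ u ∈ s.powersetCard j, ∏ ρ ∈ u, Z ρ (x ρ) with hC0
    set C1 : ℝ := ∑ u ∈ s.powersetCard (j+1), ∏ ρ ∈ u, Z ρ (x ρ) with hC1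
    have hprod : ∀ (t : ℝ) (k : ℕ),
        ∑ u ∈ s.powersetCard k, ∏ ρ ∈ u, Z ρ (Function.update x ν t ρ)
          = ∑ u ∈ s.powersetCard k, ∏ ρ ∈ u, Z ρ (x ρ) := by
      intro t k
      refine Finset.sum_congr rfl fun u hu => Finset.prod_congr rfl fun ρ hρ => ?_
      have : ρ ≠ ν := fun h => hνs (h ▸ (Finset.mem_powersetCard.1 hu).1 hρ)
      rw [Function.update_of_ne this]
    have hfun : (fun t => A μ (j+1) (Function.update x ν t))
        = fun t => C1 + Z ν t * C0 := by
      funext t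
      rw [hA, h1, sum_powersetCard_insert_aux s ν hνs j
        (fun ρ => Z ρ (Function.update x ν t ρ))]
      simp only [Function.update_self]
      rw [hprod t (j+1), hprod t j]
    have hAμ : A μ (j+1) x = C1 + Z ν (x ν) * C0 := by
      rw [hA, h1, sum_powersetCard_insert_aux s ν hνs j (fun ρ => Z ρ (x ρ))]
    have hAν : A ν (j+1) x = C1 + Z μ (x μ) * C0 := by
      rw [hA, h2, sum_powersetCard_insert_aux s μ hμs j (fun ρ => Z ρ (x ρ))]
    have hderiv : deriv (fun t => A μ (j+1) (Function.update x ν t)) (x ν)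
        = deriv (Z ν) (x ν) * C0 := by
      rw [hfun]
      rw [deriv_const_add]
      exact deriv_mul_const (hdiff ν).differentiableAt C0
    rw [hderiv, hAμ, hAν]
    have hba : Z ν (x ν) - Z μ (x μ) ≠ 0 := sub_ne_zero.2 (hne ν μ (Ne.symm hμν))
    field_simp
    ring
end

section
/- Suppose N ≥ 2 and F_1, ..., F_N : ℝ → ℝ are continuous single-variable functions and Z_1, ..., Z_N : ℝ → ℝ are differentiable, injective functions with Z'_μ ≠ 0 such that the values Z_μ(x_μ) are pairwise distinct on an open box domain, with U_μ = ∏_{ν≠μ}(Z_ν(x_ν) − Z_μ(x_μ)). If Σ_μ F_μ(x_μ)/U_μ = 0 identically on the domain, then there exist constants a_0, ..., a_{N−2} such that F_μ(x_μ) = Σ_{k=0}^{N−2} a_k (−Z_μ(x_μ))^k for every μ. -/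
open Finset

open Polynomial in
lemma aux_frac {ι : Type*} [DecidableEq ι] (s : Finset ι) (c : ι → ℝ) (hc : Set.InjOn c s)
    (A : ι → ℝ) (T : Set ℝ) (hT : T.Infinite)
    (hTc : ∀ t ∈ T, ∀ ν ∈ s, t ≠ c ν)
    (h : ∀ t ∈ T, ∑ ν ∈ s, A ν / (t - c ν) = 0) :
    ∀ ν ∈ s, A ν = 0 := by
  set p : ℝ[X] := ∑ ν ∈ s, C (A ν) * ∏ ρ ∈ s.erase ν, (X - C (c ρ)) with hp
  have hpz : p = 0 := by
    apply p.eq_zero_of_infinite_isRoot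
    apply hT.mono
    intro t ht
    simp only [Set.mem_setOf_eq, IsRoot]
    have hne : ∀ ρ ∈ s, t - c ρ ≠ 0 := fun ρ hρ => sub_ne_zero.2 (hTc t ht ρ hρ)
    have hev : p.eval t = (∏ ρ ∈ s, (t - c ρ)) * ∑ ν ∈ s, A ν / (t - c ν) := by
      rw [mul_sum, hp]
      simp only [eval_finset_sum, eval_mul, eval_C, eval_prod, eval_sub, eval_X]
      refine Finset.sum_congr rfl fun ν hν => ?_
      rw [← Finset.mul_prod_erase s _ hν]
      field_simp [hne ν hν]
    rw [hev, h t ht, mul_zero]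
  intro ν hν
  have hev := congrArg (Polynomial.eval (c ν)) hpz
  rw [hp] at hev
  simp only [eval_finset_sum, eval_mul, eval_C, eval_prod, eval_sub, eval_X, eval_zero] at hev
  rw [Finset.sum_eq_single ν (fun ν' hν' hne' => by
      have h0 : (∏ ρ ∈ s.erase ν', (c ν - c ρ)) = 0 :=
        Finset.prod_eq_zero (Finset.mem_erase.mpr ⟨Ne.symm hne', hν⟩) (sub_self _)
      rw [h0, mul_zero])
    (fun h' => absurd hν h')] at hev
  have hprod : ∏ ρ ∈ s.erase ν, (c ν - c ρ) ≠ 0 := by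
    rw [Finset.prod_ne_zero_iff]
    intro ρ hρ
    rcases Finset.mem_erase.mp hρ with ⟨hρν, hρs⟩
    exact sub_ne_zero.2 fun hcc => hρν (hc hρs hν (by rw [hcc]) |>.symm ▸ rfl)
  exact (mul_eq_zero.mp hev).resolve_right hprod

open Polynomial in
lemma aux_lagrange (N : ℕ) (w : Fin N → ℝ) (hw : Function.Injective w)
    (p : ℝ[X]) (hp : p.degree < ((N - 1 : ℕ) : WithBot ℕ)) :
    ∑ μ, p.eval (w μ) / ∏ ν ∈ univ.erase μ, (w ν - w μ) = 0 := by
  have hinj : Set.InjOn w (univ : Finset (Fin N)) := Set.injOn_of_injective hw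
  have hcard : #(univ : Finset (Fin N)) = N := by simp
  have hdeg : p.degree < #(univ : Finset (Fin N)) := by
    rw [hcard]
    exact hp.trans_le (by exact_mod_cast Nat.sub_le N 1)
  have hinterp := Lagrange.eq_interpolate hinj hdeg
  have hbasis : ∀ i : Fin N, (Lagrange.basis univ w i).coeff (N - 1)
      = (∏ ν ∈ univ.erase i, (w i - w ν))⁻¹ := by
    intro i
    have hnd : (Lagrange.basis univ w i).natDegree = N - 1 := by
      rw [Lagrange.natDegree_basis hinj (mem_univ i), hcard]
    rw [← hnd, ← leadingCoeff, Lagrange.basis, leadingCoeff_prod, ← Finset.prod_inv_distrib]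
    refine Finset.prod_congr rfl fun ν hν => ?_
    rw [Lagrange.basisDivisor, leadingCoeff_mul, leadingCoeff_C, (monic_X_sub_C (w ν)).leadingCoeff,
      mul_one]
  have hc0 : (0 : ℝ) = ∑ i, p.eval (w i) * (∏ ν ∈ univ.erase i, (w i - w ν))⁻¹ := by
    calc (0 : ℝ) = p.coeff (N - 1) := (coeff_eq_zero_of_degree_lt hp).symm
    _ = (Lagrange.interpolate univ w fun i => p.eval (w i)).coeff (N - 1) := by rw [← hinterp]
    _ = _ := by
        rw [Lagrange.interpolate_apply, finset_sum_coeff]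
        exact Finset.sum_congr rfl fun i _ => by rw [coeff_C_mul, hbasis i]
  have key : ∀ μ : Fin N, (∏ ν ∈ univ.erase μ, (w ν - w μ))
      = (-1 : ℝ) ^ (N - 1) * ∏ ν ∈ univ.erase μ, (w μ - w ν) := by
    intro μ
    rw [Finset.prod_congr rfl (fun ν _ => show w ν - w μ = -1 * (w μ - w ν) by ring),
      Finset.prod_mul_distrib, Finset.prod_const, card_erase_of_mem (mem_univ μ), card_univ,
      Fintype.card_fin]
  calc ∑ μ, p.eval (w μ) / ∏ ν ∈ univ.erase μ, (w ν - w μ)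
      = ∑ μ, (-1 : ℝ) ^ (N - 1) * (p.eval (w μ) * (∏ ν ∈ univ.erase μ, (w μ - w ν))⁻¹) := by
        refine Finset.sum_congr rfl fun μ _ => ?_
        rw [key μ, div_eq_mul_inv, mul_inv, ← inv_pow, inv_neg, inv_one]
        ring
    _ = (-1 : ℝ) ^ (N - 1) * ∑ μ, p.eval (w μ) * (∏ ν ∈ univ.erase μ, (w μ - w ν))⁻¹ :=
        (Finset.mul_sum _ _ _).symm
    _ = 0 := by rw [← hc0, mul_zero]

open Polynomial in
theorem stmt_12 (N : ℕ) (hN : 2 ≤ N)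
    (F : Fin N → ℝ → ℝ) (hF : ∀ μ, Continuous (F μ))
    (Z : Fin N → ℝ → ℝ)
    (hZdiff : ∀ μ, Differentiable ℝ (Z μ))
    (hZ' : ∀ μ t, deriv (Z μ) t ≠ 0)
    (hZinj : ∀ μ, Function.Injective (Z μ))
    (a b : Fin N → ℝ) (hab : ∀ μ, a μ < b μ)
    (hne : ∀ x : Fin N → ℝ, (∀ μ, x μ ∈ Set.Ioo (a μ) (b μ)) →
      ∀ μ ν, μ ≠ ν → Z μ (x μ) ≠ Z ν (x ν))
    (hsum : ∀ x : Fin N → ℝ, (∀ μ, x μ ∈ Set.Ioo (a μ) (b μ)) →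
      ∑ μ, F μ (x μ) / ∏ ν ∈ univ.erase μ, (Z ν (x ν) - Z μ (x μ)) = 0) :
    ∃ c : ℕ → ℝ, ∀ (μ : Fin N) (x : Fin N → ℝ), (∀ ν, x ν ∈ Set.Ioo (a ν) (b ν)) →
      F μ (x μ) = ∑ k ∈ range (N - 1), c k * (-(Z μ (x μ))) ^ k := by
  classical
  set y : Fin N → ℝ := fun ν => (a ν + b ν) / 2 with hy_def
  have hy : ∀ ν, y ν ∈ Set.Ioo (a ν) (b ν) := fun ν => ⟨by simp only [hy_def]; linarith [hab ν],
    by simp only [hy_def]; linarith [hab ν]⟩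
  set z : Fin N → ℝ := fun ν => Z ν (y ν) with hz_def
  have claimA : ∀ μ : Fin N, ∃ Q : ℝ[X], Q.natDegree ≤ N - 2 ∧
      ∀ t ∈ Set.Ioo (a μ) (b μ), F μ t = Q.eval (Z μ t) := by
    intro μ
    refine ⟨∑ ν ∈ univ.erase μ,
        C (F ν (y ν) / ∏ ρ ∈ (univ.erase μ).erase ν, (z ρ - z ν)) *
        ∏ ρ ∈ (univ.erase μ).erase ν, (C (z ρ) - X), ?_, ?_⟩
    · refine natDegree_sum_le_of_forall_le _ _ fun ν hν => ?_
      refine (natDegree_C_mul_le _ _).trans ((natDegree_prod_le _ _).trans ?_)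
      have h1 : ∀ ρ ∈ (univ.erase μ).erase ν, (C (z ρ) - X : ℝ[X]).natDegree ≤ 1 := by
        intro ρ _
        rw [show (C (z ρ) - X : ℝ[X]) = -(X - C (z ρ)) by ring, natDegree_neg, natDegree_X_sub_C]
      refine (Finset.sum_le_sum h1).trans ?_
      rw [Finset.sum_const, smul_eq_mul, mul_one, card_erase_of_mem (mem_erase.mpr
        ⟨(mem_erase.mp hν).1, mem_univ ν⟩), card_erase_of_mem (mem_univ μ), card_univ,
        Fintype.card_fin, Nat.sub_sub]
    · intro t ht
      set x := Function.update y μ t with hx_def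
      have hxμ : x μ = t := Function.update_self μ t y
      have hxν : ∀ ν, ν ≠ μ → x ν = y ν := fun ν h => Function.update_of_ne h t y
      have hx : ∀ ν, x ν ∈ Set.Ioo (a ν) (b ν) := by
        intro ν
        by_cases h : ν = μ
        · subst h; rw [hxμ]; exact ht
        · rw [hxν ν h]; exact hy ν
      have hdist := hne x hx
      have hzz : ∀ ρ ν : Fin N, ρ ≠ ν → z ρ - z ν ≠ 0 :=
        fun ρ ν h => sub_ne_zero.2 (hne y hy ρ ν h)
      have hzZ : ∀ ν, ν ≠ μ → z ν - Z μ t ≠ 0 := by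
        intro ν h
        have := hdist ν μ h
        rw [hxν ν h, hxμ] at this
        exact sub_ne_zero.2 this
      have hsx := hsum x hx
      rw [← Finset.add_sum_erase univ _ (mem_univ μ)] at hsx
      have hPne : (∏ ν ∈ univ.erase μ, (z ν - Z μ t)) ≠ 0 :=
        Finset.prod_ne_zero_iff.mpr fun ν hν => hzZ ν (mem_erase.mp hν).1
      have hμterm : F μ (x μ) / ∏ ν ∈ univ.erase μ, (Z ν (x ν) - Z μ (x μ))
          = F μ t / ∏ ν ∈ univ.erase μ, (z ν - Z μ t) := by
        rw [hxμ]
        congr 1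
        exact Finset.prod_congr rfl fun ν hν => by rw [hxν ν (mem_erase.mp hν).1]
      rw [hμterm] at hsx
      have hFt : F μ t = -(∏ ν ∈ univ.erase μ, (z ν - Z μ t)) *
          ∑ ν ∈ univ.erase μ, F ν (x ν) / ∏ ρ ∈ univ.erase ν, (Z ρ (x ρ) - Z ν (x ν)) := by
        have := eq_neg_of_add_eq_zero_left hsx
        field_simp at this ⊢
        linarith [this]
      rw [hFt]
      rw [eval_finset_sum, neg_mul, Finset.mul_sum, ← Finset.sum_neg_distrib]
      refine Finset.sum_congr rfl fun ν hν => ?_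
      obtain ⟨hνμ, -⟩ := mem_erase.mp hν
      have hμν : μ ∈ univ.erase ν := mem_erase.mpr ⟨hνμ.symm, mem_univ μ⟩
      have hden : ∏ ρ ∈ univ.erase ν, (Z ρ (x ρ) - Z ν (x ν))
          = (Z μ t - z ν) * ∏ ρ ∈ (univ.erase μ).erase ν, (z ρ - z ν) := by
        rw [← Finset.mul_prod_erase _ _ hμν, hxμ, hxν ν hνμ]
        congr 1
        · rw [Finset.erase_right_comm]
          exact Finset.prod_congr rfl fun ρ hρ => by
            rw [hxν ρ (mem_erase.mp (Finset.mem_of_mem_erase hρ)).1]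
      have hP : ∏ ν' ∈ univ.erase μ, (z ν' - Z μ t)
          = (z ν - Z μ t) * ∏ ρ ∈ (univ.erase μ).erase ν, (z ρ - Z μ t) :=
        (Finset.mul_prod_erase _ _ hν).symm
      have hEne : (∏ ρ ∈ (univ.erase μ).erase ν, (z ρ - z ν)) ≠ 0 :=
        Finset.prod_ne_zero_iff.mpr fun ρ hρ => hzz ρ ν (mem_erase.mp hρ).1
      have hTz : Z μ t - z ν ≠ 0 := sub_ne_zero.2 fun h => (hzZ ν hνμ) (by rw [h]; ring)
      rw [hden, hxν ν hνμ, hP]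
      simp only [eval_mul, eval_C, eval_prod, eval_sub, eval_X]
      field_simp
      ring
  choose Q hQd hQe using claimA
  have hN0 : 0 < N := by omega
  let i0 : Fin N := ⟨0, hN0⟩
  have hQdeg : ∀ μ, (Q μ).degree < ((N - 1 : ℕ) : WithBot ℕ) := by
    intro μ
    calc (Q μ).degree ≤ ((Q μ).natDegree : WithBot ℕ) := degree_le_natDegree
    _ < _ := by exact_mod_cast lt_of_le_of_lt (hQd μ) (by omega)
  have hQeq : ∀ μ, Q μ = Q i0 := by
    intro μ
    by_cases hμ0 : μ = i0
    · rw [hμ0]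
    have hroots : ∀ t ∈ Set.Ioo (a μ) (b μ), (Q μ - Q i0).eval (Z μ t) = 0 := by
      intro t ht
      set x' := Function.update y μ t with hx'_def
      have hx'μ : x' μ = t := Function.update_self μ t y
      have hx'ν : ∀ ν, ν ≠ μ → x' ν = y ν := fun ν h => Function.update_of_ne h t y
      have hx' : ∀ ν, x' ν ∈ Set.Ioo (a ν) (b ν) := by
        intro ν
        by_cases h : ν = μ
        · subst h; rw [hx'μ]; exact ht
        · rw [hx'ν ν h]; exact hy ν
      set c : Fin N → ℝ := fun ν => Z ν (x' ν) with hc_def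
      set E : Fin N → ℝ := fun ν => ∏ ρ ∈ (univ.erase i0).erase ν, (c ρ - c ν) with hE_def
      have hEne : ∀ ν, E ν ≠ 0 := fun ν =>
        Finset.prod_ne_zero_iff.mpr fun ρ hρ => sub_ne_zero.2
          (hne x' hx' ρ ν (mem_erase.mp hρ).1)
      have key := aux_frac (univ.erase i0) c
        (fun p hp q hq hpq => by
          by_contra hpq'
          exact hne x' hx' p q hpq' hpq)
        (fun ν => (Q ν - Q i0).eval (c ν) / E ν)
        (Z i0 '' Set.Ioo (a i0) (b i0))
        ((Set.Ioo_infinite (hab i0)).image (Set.injOn_of_injective (hZinj i0)))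
        (by
          rintro _ ⟨s, hs, rfl⟩ ν hν
          set x := Function.update x' i0 s with hxx_def
          have hxi0 : x i0 = s := Function.update_self i0 s x'
          have hxν : ∀ ρ, ρ ≠ i0 → x ρ = x' ρ := fun ρ h => Function.update_of_ne h s x'
          have hx : ∀ ρ, x ρ ∈ Set.Ioo (a ρ) (b ρ) := by
            intro ρ
            by_cases h : ρ = i0
            · subst h; rw [hxi0]; exact hs
            · rw [hxν ρ h]; exact hx' ρ
          have := hne x hx i0 ν (Ne.symm (mem_erase.mp hν).1)
          rw [hxi0, hxν ν (mem_erase.mp hν).1] at this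
          exact this)
        (by
          rintro _ ⟨s, hs, rfl⟩
          set x := Function.update x' i0 s with hxx_def
          have hxi0 : x i0 = s := Function.update_self i0 s x'
          have hxν : ∀ ρ, ρ ≠ i0 → x ρ = x' ρ := fun ρ h => Function.update_of_ne h s x'
          have hx : ∀ ρ, x ρ ∈ Set.Ioo (a ρ) (b ρ) := by
            intro ρ
            by_cases h : ρ = i0
            · subst h; rw [hxi0]; exact hs
            · rw [hxν ρ h]; exact hx' ρ
          have hwinj : Function.Injective (fun ν => Z ν (x ν)) := by
            intro p q hpq
            by_contra hpq'
            exact hne x hx p q hpq' hpq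
          have h1 : ∑ ν, (Q ν).eval (Z ν (x ν)) /
              ∏ ρ ∈ univ.erase ν, (Z ρ (x ρ) - Z ν (x ν)) = 0 := by
            rw [← hsum x hx]
            exact Finset.sum_congr rfl fun ν _ => by rw [hQe ν _ (hx ν)]
          have h2 := aux_lagrange N (fun ν => Z ν (x ν)) hwinj (Q i0) (hQdeg i0)
          have h3 : ∑ ν, (Q ν - Q i0).eval (Z ν (x ν)) /
              ∏ ρ ∈ univ.erase ν, (Z ρ (x ρ) - Z ν (x ν)) = 0 := by
            simp only [eval_sub, sub_div]
            rw [Finset.sum_sub_distrib, h1, h2, sub_zero]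
          rw [← Finset.add_sum_erase univ _ (mem_univ i0)] at h3
          simp only [sub_self, eval_zero, zero_div, zero_add] at h3
          rw [← h3]
          refine Finset.sum_congr rfl fun ν hν => ?_
          obtain ⟨hνi0, -⟩ := mem_erase.mp hν
          have hi0ν : i0 ∈ univ.erase ν := mem_erase.mpr ⟨Ne.symm hνi0, mem_univ i0⟩
          have hden : ∏ ρ ∈ univ.erase ν, (Z ρ (x ρ) - Z ν (x ν))
              = (Z i0 s - c ν) * E ν := by
            rw [← Finset.mul_prod_erase _ _ hi0ν, hxi0, hxν ν hνi0]
            congr 1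
            rw [hE_def]
            simp only
            rw [Finset.erase_right_comm]
            exact Finset.prod_congr rfl fun ρ hρ => by
              rw [hxν ρ (mem_erase.mp (Finset.mem_of_mem_erase hρ)).1]
          rw [hden, hxν ν hνi0, div_div, mul_comm (E ν) _])
      have hμmem : μ ∈ univ.erase i0 := mem_erase.mpr ⟨hμ0, mem_univ μ⟩
      have hkey : Polynomial.eval (c μ) (Q μ - Q i0) / E μ = 0 := key μ hμmem
      have hcμ : c μ = Z μ t := by simp only [hc_def, hx'μ]
      rcases _root_.div_eq_zero_iff.mp hkey with h | h
      · rw [← hcμ]; exact h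
      · exact absurd h (hEne μ)
    have hsub : Q μ - Q i0 = 0 := by
      apply Polynomial.eq_zero_of_infinite_isRoot
      apply ((Set.Ioo_infinite (hab μ)).image (Set.injOn_of_injective (hZinj μ))).mono
      rintro _ ⟨t, ht, rfl⟩
      exact hroots t ht
    exact sub_eq_zero.mp hsub
  refine ⟨fun k => (-1 : ℝ) ^ k * (Q i0).coeff k, fun μ x hx => ?_⟩
  rw [hQe μ (x μ) (hx μ), hQeq μ,
    eval_eq_sum_range' (lt_of_le_of_lt (hQd i0) (show N - 2 < N - 1 by omega)) (Z μ (x μ))]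
  refine Finset.sum_congr rfl fun k _ => ?_
  have h1 : ((-1 : ℝ)) ^ k * (-1 : ℝ) ^ k = 1 := by
    rw [← pow_add]
    exact Even.neg_one_pow ⟨k, rfl⟩
  calc (Q i0).coeff k * Z μ (x μ) ^ k
      = ((-1 : ℝ) ^ k * (-1 : ℝ) ^ k) * ((Q i0).coeff k * Z μ (x μ) ^ k) := by rw [h1, one_mul]
    _ = (-1 : ℝ) ^ k * (Q i0).coeff k * (-(Z μ (x μ))) ^ k := by rw [neg_pow]; ring
end
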